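/- arXiv:1307.3272 — 4 statements merged into one kernel-verified Lean document; each statement's English description precedes it below -/
import Mathlib

section
/- Let q and q' be two sets in R^d with max(diam(q), diam(q')) ≤ ε·d(q,q'), where d(q,q') is the infimum distance between q and q'. Then for any closed ball B (of radius r and center c) that contains at least one point of q and one point of q', all of q and all of q' are contained in the ball of radius (1+2ε)·r centered at c. -/
theorem wspd_expansion_covers
    (d : ℕ) (q q' : Set (EuclideanSpace ℝ (Fin d)))
    (hq : q.Nonempty) (hq' : q'.Nonempty)
    (hbq : Bornology.IsBounded q) (hbq' : Bornology.IsBounded q')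
    (ε : ℝ) (hε : 0 < ε)
    (hsep : max (Metric.diam q) (Metric.diam q')
      ≤ ε * sInf {t : ℝ | ∃ x ∈ q, ∃ y ∈ q', t = dist x y})
    (c : EuclideanSpace ℝ (Fin d)) (r : ℝ)
    (hqB : (q ∩ Metric.closedBall c r).Nonempty)
    (hq'B : (q' ∩ Metric.closedBall c r).Nonempty) :
    q ∪ q' ⊆ Metric.closedBall c ((1 + 2 * ε) * r) := by
  obtain ⟨x0, hx0q, hx0B⟩ := hqB
  obtain ⟨y0, hy0q, hy0B⟩ := hq'B
  rw [Metric.mem_closedBall] at hx0B hy0B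
  have hbdd : BddBelow {t : ℝ | ∃ x ∈ q, ∃ y ∈ q', t = dist x y} := by
    refine ⟨0, ?_⟩
    rintro t ⟨x, _, y, _, rfl⟩
    exact dist_nonneg
  have hsInf : sInf {t : ℝ | ∃ x ∈ q, ∃ y ∈ q', t = dist x y} ≤ dist x0 y0 :=
    csInf_le hbdd ⟨x0, hx0q, y0, hy0q, rfl⟩
  have hd : dist x0 y0 ≤ 2 * r := by
    calc dist x0 y0 ≤ dist x0 c + dist c y0 := dist_triangle _ _ _
    _ ≤ r + r := add_le_add hx0B (by rwa [dist_comm])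
    _ = 2 * r := by ring
  have hsInf2 : sInf {t : ℝ | ∃ x ∈ q, ∃ y ∈ q', t = dist x y} ≤ 2 * r :=
    hsInf.trans hd
  have hdq : Metric.diam q ≤ ε * (2 * r) :=
    (le_max_left _ _).trans (hsep.trans (by nlinarith))
  have hdq' : Metric.diam q' ≤ ε * (2 * r) :=
    (le_max_right _ _).trans (hsep.trans (by nlinarith))
  rintro z (hz | hz) <;> rw [Metric.mem_closedBall]
  · calc dist z c ≤ dist z x0 + dist x0 c := dist_triangle _ _ _
    _ ≤ Metric.diam q + r := add_le_add (Metric.dist_le_diam_of_mem hbq hz hx0q) hx0B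
    _ ≤ ε * (2 * r) + r := by linarith
    _ = (1 + 2 * ε) * r := by ring
  · calc dist z c ≤ dist z y0 + dist y0 c := dist_triangle _ _ _
    _ ≤ Metric.diam q' + r := add_le_add (Metric.dist_le_diam_of_mem hbq' hz hy0q) hy0B
    _ ≤ ε * (2 * r) + r := by linarith
    _ = (1 + 2 * ε) * r := by ring
end

section
/- Vietoris–Rips Lemma: for a finite point set S ⊆ R^d and α ≥ 0, if σ ⊆ S satisfies diam(σ) ≤ 2α (i.e., every pair of points in σ is within distance 2α), then the circumradius of σ is at most √2·α; hence R_{2α}(S) ⊆ C_{√2·α}(S). -/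
noncomputable def rad {d : ℕ} (S : Set (EuclideanSpace ℝ (Fin d))) : ℝ :=
  ⨅ x : EuclideanSpace ℝ (Fin d), sSup ((fun p => dist p x) '' S)

theorem vietoris_rips_lemma (d : ℕ)
    (S : Finset (EuclideanSpace ℝ (Fin d))) (α : ℝ) (hα : 0 ≤ α)
    (σ : Finset (EuclideanSpace ℝ (Fin d))) (hσS : σ ⊆ S) (hσ : σ.Nonempty)
    (hdiam : Metric.diam (σ : Set (EuclideanSpace ℝ (Fin d))) ≤ 2 * α) :
    rad (σ : Set (EuclideanSpace ℝ (Fin d))) ≤ Real.sqrt 2 * α := by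
  classical
  let E := EuclideanSpace ℝ (Fin d)
  obtain ⟨p₀, hp₀⟩ := hσ
  set g : E → ℝ := fun x => σ.sup' ⟨p₀, hp₀⟩ (fun p => dist p x) with hgdef
  have hgcont : Continuous g := by
    apply Continuous.finset_sup'_apply ⟨p₀, hp₀⟩
    intro p _
    exact continuous_const.dist continuous_id
  have hgle : ∀ x : E, ∀ p ∈ σ, dist p x ≤ g x := by
    intro x p hp
    exact Finset.le_sup' (fun p => dist p x) hp
  have hR0 : 0 ≤ g p₀ := le_trans dist_nonneg (hgle p₀ p₀ hp₀)
  -- minimize g on a compact ball, hence globally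
  obtain ⟨c, hcB, hcmin⟩ := (isCompact_closedBall p₀ (g p₀)).exists_isMinOn
    ⟨p₀, by simpa using hR0⟩ hgcont.continuousOn
  have hglobal : ∀ x : E, g c ≤ g x := by
    intro x
    by_cases hx : x ∈ Metric.closedBall p₀ (g p₀)
    · exact hcmin hx
    · have h1 : g p₀ < dist p₀ x := by
        rw [Metric.mem_closedBall] at hx
        rw [dist_comm]; linarith [not_le.mp hx]
      have h2 : g c ≤ g p₀ := hcmin (by simpa using hR0)
      exact le_trans (le_trans h2 h1.le) (hgle x p₀ hp₀)
  set r := g c with hrdef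
  have hr0 : 0 ≤ r := le_trans dist_nonneg (hgle c p₀ hp₀)
  -- key claim: two farthest points with nonpositive inner product
  have key : ∃ p ∈ σ, ∃ q ∈ σ, dist p c = r ∧ dist q c = r ∧
      inner (𝕜 := ℝ) (p - c) (q - c) ≤ (0 : ℝ) := by
    by_contra hcon
    push_neg at hcon
    obtain ⟨p₁, hp₁, hp₁r⟩ := Finset.exists_mem_eq_sup' (⟨p₀, hp₀⟩ : σ.Nonempty)
      (fun p => dist p c)
    have hp₁r : dist p₁ c = r := hp₁r.symm
    set v := p₁ - c with hv
    have hvpos : 0 < ‖v‖ := by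
      have := hcon p₁ hp₁ p₁ hp₁ hp₁r hp₁r
      rw [real_inner_self_eq_norm_sq] at this
      nlinarith [norm_nonneg v]
    set ε : E → ℝ := fun p =>
      if dist p c = r then (2 * inner (𝕜 := ℝ) (p - c) v) / ‖v‖ ^ 2
      else (r - dist p c) / ‖v‖ with hε
    have hεpos : ∀ p ∈ σ, 0 < ε p := by
      intro p hp
      by_cases h : dist p c = r
      · simp only [hε, if_pos h]
        exact div_pos (by linarith [hcon p hp p₁ hp₁ h hp₁r]) (by positivity)
      · simp only [hε, if_neg h]
        have : dist p c < r := lt_of_le_of_ne (hgle c p hp) h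
        exact div_pos (by linarith) hvpos
    set t := σ.inf' ⟨p₀, hp₀⟩ ε / 2 with ht
    have hinfpos : 0 < σ.inf' ⟨p₀, hp₀⟩ ε := by
      exact (Finset.lt_inf'_iff (H := _)).mpr hεpos
    have htpos : 0 < t := by positivity
    have htlt : ∀ p ∈ σ, t < ε p := fun p hp =>
      lt_of_lt_of_le (by linarith) (Finset.inf'_le ε hp)
    set c' := c + t • v with hc'
    have hlt : ∀ p ∈ σ, dist p c' < r := by
      intro p hp
      by_cases h : dist p c = r
      · have hsq : dist p c' ^ 2 = ‖p - c‖ ^ 2 - 2 * (t * inner (𝕜 := ℝ) (p - c) v)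
            + t ^ 2 * ‖v‖ ^ 2 := by
          rw [dist_eq_norm, hc', show p - (c + t • v) = (p - c) - t • v by abel,
            norm_sub_sq_real, real_inner_smul_right, norm_smul]
          rw [Real.norm_eq_abs, abs_of_pos htpos]
          ring
        have hb := htlt p hp
        simp only [ε, if_pos h] at hb
        have hb' : t * ‖v‖ ^ 2 < 2 * inner (𝕜 := ℝ) (p - c) v := by
          rw [lt_div_iff₀ (by positivity)] at hb
          linarith
        have hnlt : dist p c' ^ 2 < r ^ 2 := by
          have hpc : ‖p - c‖ = r := by rw [← dist_eq_norm]; exact h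
          rw [hsq, hpc]
          nlinarith
        nlinarith [dist_nonneg (x := p) (y := c')]
      · have hb := htlt p hp
        simp only [ε, if_neg h] at hb
        have : dist p c' ≤ dist p c + t * ‖v‖ := by
          calc dist p c' ≤ dist p c + dist c c' := dist_triangle p c c'
            _ = dist p c + t * ‖v‖ := by
                rw [hc', dist_self_add_right, norm_smul, Real.norm_eq_abs,
                  abs_of_pos htpos]
        have hb' : t * ‖v‖ < r - dist p c := by
          rw [lt_div_iff₀ hvpos] at hb; linarith
        linarith
    have : g c' < r := by
      rw [hgdef]
      exact (Finset.sup'_lt_iff _).mpr hlt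
    linarith [hglobal c']
  obtain ⟨p, hp, q, hq, hpr, hqr, hinner⟩ := key
  -- law of cosines bound
  have hdistpq : dist p q ≤ 2 * α := by
    refine le_trans (Metric.dist_le_diam_of_mem ?_ (by exact_mod_cast hp)
      (by exact_mod_cast hq)) hdiam
    exact σ.finite_toSet.isBounded
  have hsq : dist p q ^ 2 = ‖p - c‖ ^ 2 - 2 * inner (𝕜 := ℝ) (p - c) (q - c)
      + ‖q - c‖ ^ 2 := by
    rw [dist_eq_norm, show p - q = (p - c) - (q - c) by abel, norm_sub_sq_real]
  have hpc : ‖p - c‖ = r := by rw [← dist_eq_norm]; exact hpr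
  have hqc : ‖q - c‖ = r := by rw [← dist_eq_norm]; exact hqr
  have h2r2 : 2 * r ^ 2 ≤ 4 * α ^ 2 := by
    have hd2 : dist p q ^ 2 ≤ (2 * α) ^ 2 := by
      nlinarith [dist_nonneg (x := p) (y := q)]
    rw [hsq, hpc, hqc] at hd2
    nlinarith
  have hrle : r ≤ Real.sqrt 2 * α := by
    have : r = Real.sqrt (r ^ 2) := (Real.sqrt_sq hr0).symm
    rw [this, show Real.sqrt 2 * α = Real.sqrt (2 * α ^ 2) by
      rw [Real.sqrt_mul (by norm_num), Real.sqrt_sq hα]]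
    exact Real.sqrt_le_sqrt (by linarith)
  -- rad ≤ g c
  have hbdd : BddBelow (Set.range fun x : E => sSup ((fun p => dist p x) '' (σ : Set E))) := by
    refine ⟨0, ?_⟩
    rintro y ⟨x, rfl⟩
    have hne : ((fun p => dist p x) '' (σ : Set E)).Nonempty := ⟨dist p₀ x, p₀, hp₀, rfl⟩
    have hbdd' : BddAbove ((fun p => dist p x) '' (σ : Set E)) :=
      (σ.finite_toSet.image _).bddAbove
    exact le_csSup_of_le hbdd' ⟨p₀, hp₀, rfl⟩ dist_nonneg
  calc rad (σ : Set E) ≤ sSup ((fun p => dist p c) '' (σ : Set E)) := ciInf_le hbdd c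
    _ = r := by rw [← Finset.sup'_eq_csSup_image σ ⟨p₀, hp₀⟩ (fun p => dist p c)]
    _ ≤ Real.sqrt 2 * α := hrle
end

section
/- Assume the radius-coreset theorem: every finite P ⊆ R^d has a subset C with |C| ≤ δ := ⌈1/(2ε+ε²)+1⌉ and rad(P) ≤ (1+ε)·rad(C). Define the (δ−1)-completion M of the Čech complex C_α(S) as the set of σ ⊆ S such that every subset τ ⊆ σ with |τ| ≤ δ satisfies rad(τ) ≤ α. Then C_α(S) ⊆ M ⊆ C_{(1+ε)α}(S). -/
lemma rad_mono {d : ℕ} (τ σ : Finset (EuclideanSpace ℝ (Fin d)))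
    (h : τ ⊆ σ) (hτ : τ.Nonempty) :
    rad (τ : Set (EuclideanSpace ℝ (Fin d))) ≤ rad (σ : Set (EuclideanSpace ℝ (Fin d))) := by
  unfold rad
  apply ciInf_mono
  · refine ⟨0, ?_⟩
    rintro r ⟨x, rfl⟩
    obtain ⟨p, hp⟩ := hτ
    have : (0:ℝ) ≤ dist p x := dist_nonneg
    refine le_trans this (le_csSup ?_ ⟨p, by simpa using hp, rfl⟩)
    exact ((τ.finite_toSet.image _).bddAbove)
  · intro x
    apply csSup_le_csSup ((σ.finite_toSet.image _).bddAbove)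
    · obtain ⟨p, hp⟩ := hτ
      exact ⟨_, ⟨p, by simpa using hp, rfl⟩⟩
    · exact Set.image_mono (by exact_mod_cast h)

lemma rad_empty {d : ℕ} : rad (∅ : Set (EuclideanSpace ℝ (Fin d))) = 0 := by
  unfold rad
  simp [Real.sSup_empty]

theorem completion_interleaves_cech
    (d : ℕ) (S : Finset (EuclideanSpace ℝ (Fin d)))
    (ε : ℝ) (hε : 0 < ε) (α : ℝ) (hα : 0 ≤ α)
    (δ : ℕ) (hδ : (δ : ℝ) = ⌈1 / (2 * ε + ε ^ 2) + 1⌉)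
    (hcoreset : ∀ P : Finset (EuclideanSpace ℝ (Fin d)), P.Nonempty →
      ∃ C ⊆ P, C.card ≤ δ ∧
        rad (P : Set (EuclideanSpace ℝ (Fin d)))
          ≤ (1 + ε) * rad (C : Set (EuclideanSpace ℝ (Fin d)))) :
    (∀ σ : Finset (EuclideanSpace ℝ (Fin d)), σ ⊆ S → σ.Nonempty →
      rad (σ : Set (EuclideanSpace ℝ (Fin d))) ≤ α →
      (∀ τ ⊆ σ, τ.Nonempty → τ.card ≤ δ →
        rad (τ : Set (EuclideanSpace ℝ (Fin d))) ≤ α)) ∧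
    (∀ σ : Finset (EuclideanSpace ℝ (Fin d)), σ ⊆ S → σ.Nonempty →
      (∀ τ ⊆ σ, τ.Nonempty → τ.card ≤ δ →
        rad (τ : Set (EuclideanSpace ℝ (Fin d))) ≤ α) →
      rad (σ : Set (EuclideanSpace ℝ (Fin d))) ≤ (1 + ε) * α) := by
  constructor
  · intro σ _ _ hrad τ hτσ hτne _
    exact le_trans (rad_mono τ σ hτσ hτne) hrad
  · intro σ _ hσne hall
    obtain ⟨C, hCσ, hCcard, hCrad⟩ := hcoreset σ hσne
    have h1ε : (0:ℝ) ≤ 1 + ε := by linarith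
    rcases C.eq_empty_or_nonempty with rfl | hCne
    · have : rad ((∅ : Finset (EuclideanSpace ℝ (Fin d))) : Set (EuclideanSpace ℝ (Fin d))) = 0 := by
        simpa using rad_empty (d := d)
      rw [this, mul_zero] at hCrad
      exact le_trans hCrad (by positivity)
    · have := hall C hCσ hCne hCcard
      calc rad (σ : Set (EuclideanSpace ℝ (Fin d))) ≤ (1 + ε) * rad (C : Set (EuclideanSpace ℝ (Fin d))) := hCrad
        _ ≤ (1 + ε) * α := by nlinarith [this]
end

section
/- Let T ⊆ R^d be the convex hull of d+1 points all lying on a sphere of radius r centered at c, such that c ∈ T. If B ⊆ T is the largest ball centered at c contained in T, then the radius of B is at most r/d. -/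
open Finset
open scoped RealInnerProductSpace

private lemma inr_aux
    (d : ℕ) (hd : 1 ≤ d)
    (P : Fin (d + 1) → EuclideanSpace ℝ (Fin d))
    (c : EuclideanSpace ℝ (Fin d)) (r : ℝ)
    (hsphere : ∀ i, dist (P i) c = r)
    (w : Fin (d + 1) → ℝ) (hwnn : ∀ i, 0 ≤ w i) (hwsum : ∑ i, w i = 1)
    (hcsum : ∑ i, w i • P i = c)
    (j : Fin (d + 1)) (hwj : w j * (d + 1) ≤ 1)
    (u : EuclideanSpace ℝ (Fin d)) (hu : ‖u‖ = 1)
    (a b : ℝ) (hab : a ≤ b)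
    (hPother : ∀ i, i ≠ j → ⟪u, P i⟫ = a) (hPj : ⟪u, P j⟫ = b)
    (s : ℝ) (hs : 0 ≤ s)
    (hball : Metric.closedBall c s ⊆ convexHull ℝ (Set.range P)) :
    s ≤ r / d := by
  have huc : ⟪u, c⟫ = w j * b + (1 - w j) * a := by
    have h1 : ⟪u, c⟫ = ∑ i, w i * ⟪u, P i⟫ := by
      rw [← hcsum, inner_sum]
      exact Finset.sum_congr rfl fun i _ => real_inner_smul_right u (P i) (w i)
    have h2 : ∑ i, w i * ⟪u, P i⟫
        = w j * ⟪u, P j⟫ + ∑ i ∈ univ.erase j, w i * ⟪u, P i⟫ :=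
      (Finset.add_sum_erase univ (fun i => w i * ⟪u, P i⟫) (mem_univ j)).symm
    have h3 : ∑ i ∈ univ.erase j, w i * ⟪u, P i⟫ = (1 - w j) * a := by
      have : ∑ i ∈ univ.erase j, w i * ⟪u, P i⟫ = ∑ i ∈ univ.erase j, w i * a :=
        Finset.sum_congr rfl fun i hi => by rw [hPother i (Finset.ne_of_mem_erase hi)]
      rw [this, ← Finset.sum_mul]
      have hw' : ∑ i ∈ univ.erase j, w i = 1 - w j := by
        have := Finset.add_sum_erase univ w (mem_univ j)
        rw [hwsum] at this; linarith
      rw [hw']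
    rw [h1, h2, h3, hPj]
  -- halfspace bound
  have hhalf : convexHull ℝ (Set.range P) ⊆ {y | a ≤ ⟪u, y⟫} := by
    apply convexHull_min
    · rintro y ⟨i, rfl⟩
      simp only [Set.mem_setOf_eq]
      by_cases hij : i = j
      · rw [hij, hPj]; exact hab
      · rw [hPother i hij]
    · exact convex_halfSpace_ge
        ⟨fun x y => inner_add_right u x y,
         fun t x => real_inner_smul_right u x t⟩ a
  have hx : c - s • u ∈ Metric.closedBall c s := by
    simp [dist_eq_norm, norm_smul, hu, abs_of_nonneg hs]
  have hlow : a ≤ ⟪u, c⟫ - s := by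
    have h := hhalf (hball hx)
    have hval : ⟪u, c - s • u⟫ = ⟪u, c⟫ - s := by
      rw [inner_sub_right, real_inner_smul_right, real_inner_self_eq_norm_sq, hu]
      ring
    simp only [Set.mem_setOf_eq] at h
    rw [hval] at h
    exact h
  have hCS : b - ⟪u, c⟫ ≤ r := by
    have h1 : ⟪u, P j - c⟫ ≤ ‖u‖ * ‖P j - c‖ := real_inner_le_norm u (P j - c)
    have h2 : ‖P j - c‖ = r := by rw [← dist_eq_norm]; exact hsphere j
    have h3 : ⟪u, P j - c⟫ = b - ⟪u, c⟫ := by rw [inner_sub_right, hPj]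
    rw [h3, h2, hu, one_mul] at h1; exact h1
  -- arithmetic
  have hd1 : (1 : ℝ) ≤ (d : ℝ) := by exact_mod_cast hd
  have hwjnn : 0 ≤ w j := hwnn j
  have hba : 0 ≤ b - a := sub_nonneg.mpr hab
  have h1 : s ≤ w j * (b - a) := by rw [huc] at hlow; nlinarith [hlow]
  have h2 : (1 - w j) * (b - a) ≤ r := by rw [huc] at hCS; nlinarith [hCS]
  have h3 : w j * (d : ℝ) ≤ 1 - w j := by linarith
  have h4 : (w j * (d : ℝ)) * (b - a) ≤ (1 - w j) * (b - a) :=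
    mul_le_mul_of_nonneg_right h3 hba
  have h5 : s * (d : ℝ) ≤ (w j * (b - a)) * (d : ℝ) :=
    mul_le_mul_of_nonneg_right h1 (by linarith)
  have h6 : (w j * (b - a)) * (d : ℝ) = (w j * (d : ℝ)) * (b - a) := by ring
  rw [le_div_iff₀ (by linarith : (0:ℝ) < (d:ℝ))]
  linarith

theorem inradius_le_circumradius_div_dim
    (d : ℕ) (hd : 1 ≤ d)
    (P : Fin (d + 1) → EuclideanSpace ℝ (Fin d))
    (c : EuclideanSpace ℝ (Fin d)) (r : ℝ) (hr : 0 < r)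
    (hsphere : ∀ i, dist (P i) c = r)
    (hc : c ∈ convexHull ℝ (Set.range P)) :
    ∀ s : ℝ, 0 ≤ s →
      Metric.closedBall c s ⊆ convexHull ℝ (Set.range P) → s ≤ r / d := by
  intro s hs hball
  classical
  -- extract convex weights for c
  rw [convexHull_range_eq_exists_affineCombination] at hc
  obtain ⟨t, w0, hw0, hw1, hcomb⟩ := hc
  set w : Fin (d + 1) → ℝ := fun i => if i ∈ t then w0 i else 0 with hw
  have hwnn : ∀ i, 0 ≤ w i := fun i => by
    simp only [hw]; split
    · exact hw0 i ‹_›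
    · exact le_refl 0
  have hwsum : ∑ i, w i = 1 := by
    simp only [hw]
    rw [Finset.sum_ite_mem, Finset.univ_inter, hw1]
  have hcsum : ∑ i, w i • P i = c := by
    have := Finset.affineCombination_eq_linear_combination t P w0 hw1
    rw [hcomb] at this
    rw [this]
    simp only [hw]
    rw [show ∑ x ∈ t, w0 x • P x = ∑ x ∈ Finset.univ ∩ t, w0 x • P x by
      rw [Finset.univ_inter], ← Finset.sum_ite_mem]
    refine Finset.sum_congr rfl fun i _ => ?_
    split <;> simp
  -- minimal weight index
  obtain ⟨j, -, hj⟩ : ∃ j ∈ Finset.univ, w j ≤ 1 / (d + 1) := by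
    apply Finset.exists_le_of_sum_le Finset.univ_nonempty
    rw [hwsum, Finset.sum_const, Finset.card_univ, Fintype.card_fin, nsmul_eq_mul]
    push_cast
    rw [mul_one_div, div_self (by positivity)]
  have hwj : w j * ((d : ℝ) + 1) ≤ 1 := by
    have hpos : (0:ℝ) < (d:ℝ) + 1 := by positivity
    calc w j * ((d:ℝ)+1) ≤ (1/((d:ℝ)+1)) * ((d:ℝ)+1) :=
          mul_le_mul_of_nonneg_right hj hpos.le
      _ = 1 := by field_simp
  -- another index
  haveI : Nontrivial (Fin (d + 1)) := Fin.nontrivial_iff_two_le.mpr (by omega)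
  obtain ⟨k, hk⟩ := exists_ne j
  -- orthogonal unit vector
  set F : Finset (EuclideanSpace ℝ (Fin d)) :=
    ((Finset.univ.erase j).erase k).image (fun i => P i - P k) with hF
  set V : Submodule ℝ (EuclideanSpace ℝ (Fin d)) := Submodule.span ℝ (F : Set _) with hV
  have hVne : V ≠ ⊤ := by
    intro htop
    have h1 : Module.finrank ℝ V ≤ F.card := finrank_span_finset_le_card F
    have h2 : F.card ≤ d - 1 := by
      have hck : ((Finset.univ.erase j).erase k).card = d + 1 - 1 - 1 := by
        rw [Finset.card_erase_of_mem
            (Finset.mem_erase.mpr ⟨hk, Finset.mem_univ k⟩),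
          Finset.card_erase_of_mem (Finset.mem_univ j), Finset.card_univ,
          Fintype.card_fin]
      have h3 := Finset.card_image_le (s := (Finset.univ.erase j).erase k)
        (f := fun i => P i - P k)
      rw [hck] at h3
      rw [hF]
      omega
    rw [htop, finrank_top, finrank_euclideanSpace_fin] at h1
    omega
  have hVbot : Vᗮ ≠ ⊥ := fun h => hVne (Submodule.orthogonal_eq_bot_iff.mp h)
  obtain ⟨u0, hu0V, hu0⟩ := (Submodule.ne_bot_iff _).mp hVbot
  set u : EuclideanSpace ℝ (Fin d) := ‖u0‖⁻¹ • u0 with huu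
  have hu : ‖u‖ = 1 := by
    rw [huu, norm_smul, norm_inv, norm_norm, inv_mul_cancel₀ (norm_ne_zero_iff.mpr hu0)]
  have huV : u ∈ Vᗮ := Submodule.smul_mem _ _ hu0V
  have horth : ∀ i, i ≠ j → ⟪u, P i⟫ = ⟪u, P k⟫ := by
    intro i hij
    have hmem : P i - P k ∈ V := by
      by_cases hik : i = k
      · subst hik; simp
      · apply Submodule.subset_span
        exact Finset.mem_coe.mpr (Finset.mem_image.mpr
          ⟨i, Finset.mem_erase.mpr ⟨hik, Finset.mem_erase.mpr ⟨hij, Finset.mem_univ i⟩⟩, rfl⟩)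
    have := (Submodule.mem_orthogonal V u).mp huV _ hmem
    have h2 : ⟪u, P i - P k⟫ = 0 := by rwa [real_inner_comm]
    rw [inner_sub_right] at h2; linarith
  -- two cases on sign
  rcases le_total (⟪u, P k⟫) (⟪u, P j⟫) with hcase | hcase
  · exact inr_aux d hd P c r hsphere w hwnn hwsum hcsum j hwj u hu
      (⟪u, P k⟫) (⟪u, P j⟫) hcase horth rfl s hs hball
  · refine inr_aux d hd P c r hsphere w hwnn hwsum hcsum j hwj (-u) (by simp [hu])
      (-⟪u, P k⟫) (-⟪u, P j⟫) (by linarith) ?_ ?_ s hs hball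
    · intro i hij; rw [inner_neg_left, horth i hij]
    · rw [inner_neg_left]
end
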